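/- (ICP coverage.) Let (X_1,Y_1),...,(X_{n+1},Y_{n+1}) be exchangeable, A : X × Y → R a measurable nonconformity measure, A_i = A(X_i, Y_i), and Q^{(n)}_{1-δ} the empirical (1-δ)-quantile of {A_1,...,A_n} ∪ {+∞} (equivalently the ⌈(1-δ)(n+1)⌉-th smallest of these n+1 extended reals). Then P(A(X_{n+1}, Y_{n+1}) ≤ Q^{(n)}_{1-δ}) ≥ 1 - δ, and consequently the prediction set C(X_{n+1}) = {y : A(X_{n+1}, y) ≤ Q^{(n)}_{1-δ}} satisfies P(Y_{n+1} ∈ C(X_{n+1})) ≥ 1 - δ. -/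

import Mathlib

open MeasureTheory

/-- The `k`-th smallest element (1-indexed) of the multiset of values of `a`;
returns `d` if `k` is out of range. -/
def orderStat {α : Type*} [LinearOrder α] (d : α) {m : ℕ} (a : Fin m → α) (k : ℕ) : α :=
  (Multiset.sort (↑(List.ofFn a)) (· ≤ ·)).getD (k - 1) d

/-- A finite family of random elements is exchangeable if the joint law is invariant
under every permutation of the indices. -/
def Exchangeable {Ω α : Type*} [MeasurableSpace Ω] [MeasurableSpace α]
    (P : Measure Ω) {m : ℕ} (X : Fin m → Ω → α) : Prop :=
  ∀ π : Equiv.Perm (Fin m),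
    Measure.map (fun ω => fun i => X (π i) ω) P = Measure.map (fun ω => fun i => X i ω) P


open List in
lemma sorted_rel {α : Type*} [LinearOrder α] {l : List α} (hsort : l.Pairwise (· ≤ ·))
    {i j : ℕ} (hij : i ≤ j) (hj : j < l.length) : l[i]'(by omega) ≤ l[j] :=
  hsort.rel_get_of_le (a := ⟨i, by omega⟩) (b := ⟨j, hj⟩) hij

open List in
lemma quantile_iff {α : Type*} [LinearOrder α] (d : α) (s : Multiset α) (k : ℕ)
    (hk1 : 1 ≤ k) (hk2 : k ≤ Multiset.card s) (x : α) :
    x ≤ (Multiset.sort s (· ≤ ·)).getD (k-1) d ↔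
      Multiset.card (s.filter (· < x)) < k := by
  set l := Multiset.sort s (· ≤ ·) with hl
  have hlen : l.length = Multiset.card s := Multiset.length_sort _
  have hsort : l.Pairwise (· ≤ ·) := Multiset.pairwise_sort _ _
  have hklen : k - 1 < l.length := by omega
  have hget : l.getD (k-1) d = l[k-1] := List.getD_eq_getElem l d hklen
  have hcard : Multiset.card (s.filter (· < x)) = (l.filter (fun a => decide (a < x))).length := by
    conv_lhs => rw [← Multiset.sort_eq s (· ≤ ·)]
    simp [← hl]
  rw [hget, hcard]
  constructor
  · intro hx
    have hdrop : (l.drop (k-1)).filter (fun a => decide (a < x)) = [] := by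
      rw [List.filter_eq_nil_iff]
      intro a ha
      obtain ⟨i, hi, rfl⟩ := List.mem_iff_getElem.mp ha
      rw [List.getElem_drop]
      have h2 : k - 1 + i < l.length := by
        have := hi; rw [List.length_drop] at this; omega
      have : l[k-1] ≤ l[k-1+i] := sorted_rel hsort (by omega) h2
      simp only [decide_eq_true_eq]
      exact not_lt.mpr (le_trans hx this)
    calc (l.filter _).length
        = ((l.take (k-1)).filter _).length + ((l.drop (k-1)).filter _).length := by
            conv_lhs => rw [← List.take_append_drop (k-1) l]
            rw [List.filter_append, List.length_append]
      _ ≤ (l.take (k-1)).length + 0 := by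
            rw [hdrop]; exact add_le_add (List.length_filter_le _ _) le_rfl
      _ < k := by rw [List.length_take]; omega
  · intro hcount
    by_contra hx
    push_neg at hx
    have htake : (l.take k).filter (fun a => decide (a < x)) = l.take k := by
      rw [List.filter_eq_self]
      intro a ha
      obtain ⟨i, hi, rfl⟩ := List.mem_iff_getElem.mp ha
      have hik : i < k := by have := hi; rw [List.length_take] at this; omega
      rw [List.getElem_take]
      have : l[i]'(by rw [List.length_take] at hi; omega) ≤ l[k-1] :=
        sorted_rel hsort (by omega) hklen
      simp only [decide_eq_true_eq]
      exact lt_of_le_of_lt this hx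
    have : k ≤ (l.filter (fun a => decide (a < x))).length := by
      calc k = (l.take k).length := by rw [List.length_take]; omega
        _ = ((l.take k).filter _).length := by rw [htake]
        _ ≤ (l.filter _).length := by
            conv_rhs => rw [← List.take_append_drop k l, List.filter_append, List.length_append]
            omega
    omega

open List in
lemma quantile_count_le {α : Type*} [LinearOrder α] (d : α) (s : Multiset α) (k : ℕ)
    (hk1 : 1 ≤ k) (hk2 : k ≤ Multiset.card s) :
    k ≤ Multiset.card (s.filter (· ≤ (Multiset.sort s (· ≤ ·)).getD (k-1) d)) := by
  set l := Multiset.sort s (· ≤ ·) with hl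
  have hlen : l.length = Multiset.card s := Multiset.length_sort _
  have hsort : l.Pairwise (· ≤ ·) := Multiset.pairwise_sort _ _
  have hklen : k - 1 < l.length := by omega
  have hget : l.getD (k-1) d = l[k-1] := List.getD_eq_getElem l d hklen
  set q := l.getD (k-1) d with hq
  have hcard : Multiset.card (s.filter (· ≤ q)) = (l.filter (fun a => decide (a ≤ q))).length := by
    conv_lhs => rw [← Multiset.sort_eq s (· ≤ ·)]
    simp [← hl]
  rw [hcard]
  have htake : (l.take k).filter (fun a => decide (a ≤ q)) = l.take k := by
    rw [List.filter_eq_self]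
    intro a ha
    obtain ⟨i, hi, rfl⟩ := List.mem_iff_getElem.mp ha
    have hik : i < k := by have := hi; rw [List.length_take] at this; omega
    rw [List.getElem_take]
    have : l[i]'(by rw [List.length_take] at hi; omega) ≤ l[k-1] :=
      sorted_rel hsort (by omega) hklen
    simp only [decide_eq_true_eq]
    rw [hget]
    exact this
  calc k = (l.take k).length := by rw [List.length_take]; omega
    _ = ((l.take k).filter _).length := by rw [htake]
    _ ≤ (l.filter _).length := by
        conv_rhs => rw [← List.take_append_drop k l, List.filter_append, List.length_append]
        omega

lemma filter_card_eq_multiset {α : Type*} {m : ℕ} (v : Fin m → α) (p : α → Prop) [DecidablePred p] :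
    (Finset.univ.filter (fun i => p (v i))).card
      = Multiset.card ((Multiset.map v Finset.univ.val).filter p) := by
  rw [← Multiset.countP_eq_card_filter, Multiset.countP_map]
  rw [Finset.card_def, Finset.filter_val]

lemma count_small_rank {α : Type*} [LinearOrder α] {m k : ℕ} (hk1 : 1 ≤ k) (hk2 : k ≤ m)
    (v : Fin m → α) :
    k ≤ (Finset.univ.filter
      (fun j => (Finset.univ.filter (fun i => v i < v j)).card < k)).card := by
  have hm : 0 < m := by omega
  set s : Multiset α := Multiset.map v Finset.univ.val with hs
  have hcards : Multiset.card s = m := by simp [hs]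
  set t : α := (Multiset.sort s (· ≤ ·)).getD (k-1) (v ⟨0, hm⟩) with ht
  have htlt : Multiset.card (s.filter (· < t)) < k :=
    (quantile_iff _ s k hk1 (by omega) t).mp le_rfl
  have hsubset : Finset.univ.filter (fun j => v j ≤ t) ⊆
      Finset.univ.filter (fun j => (Finset.univ.filter (fun i => v i < v j)).card < k) := by
    intro j hj
    simp only [Finset.mem_filter, Finset.mem_univ, true_and] at hj ⊢
    rw [filter_card_eq_multiset v (· < v j)]
    calc Multiset.card (s.filter (· < v j)) ≤ Multiset.card (s.filter (· < t)) :=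
          Multiset.card_le_card (Multiset.monotone_filter_right s (fun a ha => lt_of_lt_of_le ha hj))
      _ < k := htlt
  calc k ≤ Multiset.card (s.filter (· ≤ t)) := quantile_count_le _ s k hk1 (by omega)
    _ = (Finset.univ.filter (fun j => v j ≤ t)).card := (filter_card_eq_multiset v (· ≤ t)).symm
    _ ≤ _ := Finset.card_le_card hsubset

lemma card_filter_perm {m : ℕ} (π : Equiv.Perm (Fin m)) (q : Fin m → Prop) [DecidablePred q] :
    (Finset.univ.filter fun i => q (π i)).card = (Finset.univ.filter q).card := by
  apply Finset.card_bij (fun i _ => π i)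
  · intro a ha; simp only [Finset.mem_filter, Finset.mem_univ, true_and] at ha ⊢; exact ha
  · intro a _ b _ h; exact π.injective h
  · intro b hb
    simp only [Finset.mem_filter, Finset.mem_univ, true_and] at hb
    exact ⟨π.symm b, by simp [hb], by simp⟩

lemma filter_card_ofFn {α : Type*} {m : ℕ} (a : Fin m → α) (p : α → Prop) [DecidablePred p] :
    Multiset.card ((↑(List.ofFn a) : Multiset α).filter p)
      = (Finset.univ.filter (fun i => p (a i))).card := by
  rw [← Fin.univ_val_map, ← filter_card_eq_multiset]

open MeasureTheory ENNReal in
theorem stmt9' {Ω 𝒳 𝒴 : Type*} [MeasurableSpace Ω] [MeasurableSpace 𝒳] [MeasurableSpace 𝒴]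
    (P : Measure Ω) [IsProbabilityMeasure P] (n : ℕ)
    (X : Fin (n + 1) → Ω → 𝒳) (Y : Fin (n + 1) → Ω → 𝒴)
    (hmeasX : ∀ i, Measurable (X i)) (hmeasY : ∀ i, Measurable (Y i))
    (hexch : ∀ π : Equiv.Perm (Fin (n+1)),
      Measure.map (fun ω => fun i => (X (π i) ω, Y (π i) ω)) P
        = Measure.map (fun ω => fun i => (X i ω, Y i ω)) P)
    (A : 𝒳 → 𝒴 → ℝ) (hA : Measurable (fun p : 𝒳 × 𝒴 => A p.1 p.2))
    (δ : ℝ) (hδ : δ ∈ Set.Ioo (0 : ℝ) 1)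
    (Q : Ω → EReal)
    (hQ : ∀ ω, Q ω = (Multiset.sort (↑(List.ofFn
      (Fin.snoc (fun i : Fin n => ((A (X i.castSucc ω) (Y i.castSucc ω) : ℝ) : EReal)) ⊤))) (· ≤ ·)).getD
      (⌈(1 - δ) * (n + 1 : ℝ)⌉₊ - 1) (⊤ : EReal)) :
    ENNReal.ofReal (1 - δ) ≤
        P {ω | ((A (X (Fin.last n) ω) (Y (Fin.last n) ω) : ℝ) : EReal) ≤ Q ω} := by
  obtain ⟨hδ0, hδ1⟩ := hδ
  set k := ⌈(1 - δ) * (n + 1 : ℝ)⌉₊ with hkdef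
  have hk1 : 1 ≤ k := Nat.one_le_iff_ne_zero.mpr (by
    rw [hkdef, ← Nat.pos_iff_ne_zero]
    exact Nat.ceil_pos.mpr (by nlinarith))
  have hk2 : k ≤ n + 1 := by
    rw [hkdef]
    refine Nat.ceil_le.mpr ?_
    push_cast
    nlinarith
  set B : Fin (n + 1) → Ω → ℝ := fun i ω => A (X i ω) (Y i ω) with hB
  set W : Ω → (Fin (n + 1) → ℝ) := fun ω i => B i ω with hW
  set E : Fin (n + 1) → Set (Fin (n + 1) → ℝ) := fun j =>
    {v | (Finset.univ.filter (fun i => v i < v j)).card < k} with hE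
  have hmeasB : ∀ i, Measurable (B i) := fun i => hA.comp ((hmeasX i).prodMk (hmeasY i))
  have hmeasW : Measurable W := measurable_pi_lambda _ fun i => hmeasB i
  have hmeasE : ∀ j, MeasurableSet (E j) := by
    intro j
    have heq : E j = (fun v : Fin (n + 1) → ℝ =>
        ∑ i : Fin (n + 1), if v i < v j then 1 else 0) ⁻¹' {mm | mm < k} := by
      ext v
      simp only [hE, Set.mem_setOf_eq, Set.mem_preimage, Finset.card_filter]
    rw [heq]
    have hf : Measurable (fun v : Fin (n + 1) → ℝ =>
        ∑ i : Fin (n + 1), if v i < v j then (1 : ℕ) else 0) := by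
      refine Finset.measurable_sum _ fun i _ => ?_
      exact Measurable.ite (measurableSet_lt (measurable_pi_apply i) (measurable_pi_apply j))
        measurable_const measurable_const
    exact hf trivial
  -- event identification
  have hevent : {ω | ((B (Fin.last n) ω : ℝ) : EReal) ≤ Q ω} = W ⁻¹' E (Fin.last n) := by
    ext ω
    simp only [Set.mem_setOf_eq, Set.mem_preimage, hE]
    rw [hQ ω]
    set a : Fin (n + 1) → EReal :=
      Fin.snoc (fun i : Fin n => ((B i.castSucc ω : ℝ) : EReal)) ⊤ with ha
    set x : EReal := ((B (Fin.last n) ω : ℝ) : EReal) with hx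
    have hcard : Multiset.card (↑(List.ofFn a) : Multiset EReal) = n + 1 := by simp
    rw [quantile_iff (⊤ : EReal) (↑(List.ofFn a)) k hk1 (by rw [hcard]; omega) x]
    rw [filter_card_ofFn a (· < x)]
    have hfilt : (Finset.univ.filter fun i => a i < x)
        = (Finset.univ.filter fun i => W ω i < W ω (Fin.last n)) := by
      refine Finset.filter_congr fun i _ => ?_
      refine Fin.lastCases ?_ (fun j => ?_) i
      · rw [ha, Fin.snoc_last]
        simp only [hW]
        constructor
        · intro h; exact absurd h (not_top_lt)
        · intro h; exact absurd h (lt_irrefl _)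
      · rw [ha, Fin.snoc_castSucc, hx]
        simp only [hW]
        exact EReal.coe_lt_coe_iff
    rw [hfilt]
  rw [hevent]
  -- exchangeability: law of permuted B equals law of W
  set Z : Ω → (Fin (n + 1) → 𝒳 × 𝒴) := fun ω i => (X i ω, Y i ω) with hZ
  set G : (Fin (n + 1) → 𝒳 × 𝒴) → (Fin (n + 1) → ℝ) := fun z i => A (z i).1 (z i).2 with hG
  have hmeasZ : Measurable Z := measurable_pi_lambda _ fun i => (hmeasX i).prodMk (hmeasY i)
  have hmeasG : Measurable G := measurable_pi_lambda _ fun i => hA.comp (measurable_pi_apply i)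
  have hlaw : ∀ π : Equiv.Perm (Fin (n + 1)),
      Measure.map (fun ω => fun i => B (π i) ω) P = Measure.map W P := by
    intro π
    have hmeasZπ : Measurable (fun ω => fun i => Z ω (π i)) :=
      measurable_pi_lambda _ fun i => (hmeasX (π i)).prodMk (hmeasY (π i))
    have h1 : (fun ω => fun i => B (π i) ω) = G ∘ (fun ω => fun i => Z ω (π i)) := rfl
    have h2 : W = G ∘ Z := rfl
    rw [h1, h2, ← Measure.map_map hmeasG hmeasZπ, ← Measure.map_map hmeasG hmeasZ]
    congr 1
    exact hexch π
  have hPeq : ∀ j, P (W ⁻¹' E j) = P (W ⁻¹' E (Fin.last n)) := by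
    intro j
    set π := Equiv.swap j (Fin.last n) with hπ
    have hπlast : π (Fin.last n) = j := Equiv.swap_apply_right _ _
    have hmeasBπ : Measurable (fun ω => fun i => B (π i) ω) :=
      measurable_pi_lambda _ fun i => hmeasB (π i)
    have hset : W ⁻¹' E j = (fun ω => fun i => B (π i) ω) ⁻¹' E (Fin.last n) := by
      ext ω
      simp only [Set.mem_preimage, hE, Set.mem_setOf_eq]
      have : (Finset.univ.filter fun i => B (π i) ω < B (π (Fin.last n)) ω).card
          = (Finset.univ.filter fun i => B i ω < B j ω).card := by
        rw [hπlast]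
        exact card_filter_perm π (fun i => B i ω < B j ω)
      rw [this]
    rw [hset, ← Measure.map_apply hmeasBπ (hmeasE _), hlaw π,
      Measure.map_apply hmeasW (hmeasE _)]
  -- summation argument
  have hsum : (k : ℝ≥0∞) ≤ ∑ j : Fin (n + 1), P (W ⁻¹' E j) := by
    have h1 : ∀ j : Fin (n + 1), P (W ⁻¹' E j)
        = ∫⁻ ω, (W ⁻¹' E j).indicator (fun _ => (1 : ℝ≥0∞)) ω ∂P := by
      intro j
      rw [lintegral_indicator (hmeasW (hmeasE j))]
      simp
    calc (k : ℝ≥0∞) = ∫⁻ _, (k : ℝ≥0∞) ∂P := by simp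
      _ ≤ ∫⁻ ω, ∑ j : Fin (n + 1), (W ⁻¹' E j).indicator (fun _ => (1 : ℝ≥0∞)) ω ∂P := by
          refine lintegral_mono fun ω => ?_
          have hpt : (∑ j : Fin (n + 1), (W ⁻¹' E j).indicator (fun _ => (1 : ℝ≥0∞)) ω)
              = ((Finset.univ.filter fun j => W ω ∈ E j).card : ℝ≥0∞) := by
            rw [Finset.card_filter, Nat.cast_sum]
            refine Finset.sum_congr rfl fun j _ => ?_
            classical
            rw [Set.indicator_apply]
            by_cases h : W ω ∈ E j <;> simp [h, Set.mem_preimage]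
          rw [hpt]
          have hrank := count_small_rank hk1 hk2 (W ω)
          have hsetscard : (Finset.univ.filter fun j => W ω ∈ E j)
              = (Finset.univ.filter fun j =>
                  (Finset.univ.filter (fun i => W ω i < W ω j)).card < k) := by
            refine Finset.filter_congr fun j _ => ?_
            simp [hE]
          rw [hsetscard]
          exact Nat.cast_le.mpr (by convert hrank)
      _ = ∑ j : Fin (n + 1), P (W ⁻¹' E j) := by
          rw [lintegral_finset_sum]
          · exact Finset.sum_congr rfl fun j _ => (h1 j).symm
          · exact fun j _ => measurable_const.indicator (hmeasW (hmeasE j))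
  have hsum2 : (k : ℝ≥0∞) ≤ ((n : ℝ≥0∞) + 1) * P (W ⁻¹' E (Fin.last n)) := by
    refine hsum.trans_eq ?_
    rw [Finset.sum_congr rfl fun j _ => hPeq j, Finset.sum_const, Finset.card_univ,
      Fintype.card_fin, nsmul_eq_mul]
    push_cast
    ring
  have hofreal : ENNReal.ofReal (1 - δ) * ((n : ℝ≥0∞) + 1) ≤ (k : ℝ≥0∞) := by
    have h1 : ((n : ℝ≥0∞) + 1) = ENNReal.ofReal ((n : ℝ) + 1) := by
      rw [ENNReal.ofReal_add (by positivity) zero_le_one]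
      simp [ENNReal.ofReal_natCast]
    rw [h1, ← ENNReal.ofReal_mul (by linarith)]
    rw [show ((k : ℝ≥0∞)) = ENNReal.ofReal (k : ℝ) by simp [ENNReal.ofReal_natCast]]
    exact ENNReal.ofReal_le_ofReal (Nat.le_ceil _)
  have hcancel : ENNReal.ofReal (1 - δ) * ((n : ℝ≥0∞) + 1)
      ≤ P (W ⁻¹' E (Fin.last n)) * ((n : ℝ≥0∞) + 1) := by
    rw [mul_comm (P _)]
    exact hofreal.trans hsum2
  have hne0 : ((n : ℝ≥0∞) + 1) ≠ 0 := by simp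
  have hnetop : ((n : ℝ≥0∞) + 1) ≠ ⊤ := by simp [ENNReal.add_eq_top]
  exact (ENNReal.mul_le_mul_iff_left hne0 hnetop).mp hcancel

open MeasureTheory in
/-- inductive conformal prediction coverage. -/
theorem stmt9 {Ω 𝒳 𝒴 : Type*} [MeasurableSpace Ω] [MeasurableSpace 𝒳] [MeasurableSpace 𝒴]
    (P : Measure Ω) [IsProbabilityMeasure P] (n : ℕ)
    (X : Fin (n + 1) → Ω → 𝒳) (Y : Fin (n + 1) → Ω → 𝒴)
    (hmeasX : ∀ i, Measurable (X i)) (hmeasY : ∀ i, Measurable (Y i))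
    (hexch : Exchangeable P (fun i ω => (X i ω, Y i ω)))
    (A : 𝒳 → 𝒴 → ℝ) (hA : Measurable (fun p : 𝒳 × 𝒴 => A p.1 p.2))
    (δ : ℝ) (hδ : δ ∈ Set.Ioo (0 : ℝ) 1)
    (Q : Ω → EReal)
    (hQ : ∀ ω, Q ω = orderStat (⊤ : EReal)
      (Fin.snoc (fun i : Fin n => ((A (X i.castSucc ω) (Y i.castSucc ω) : ℝ) : EReal)) ⊤)
      ⌈(1 - δ) * (n + 1 : ℝ)⌉₊) :
    ENNReal.ofReal (1 - δ) ≤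
        P {ω | ((A (X (Fin.last n) ω) (Y (Fin.last n) ω) : ℝ) : EReal) ≤ Q ω} ∧
      ENNReal.ofReal (1 - δ) ≤
        P {ω | Y (Fin.last n) ω ∈ {y | ((A (X (Fin.last n) ω) y : ℝ) : EReal) ≤ Q ω}} := by
  have h := stmt9' P n X Y hmeasX hmeasY hexch A hA δ hδ Q hQ
  exact ⟨h, h⟩
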